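/- Let B₁ be an n×n skew-symmetrizable integer matrix and B₂ an m×n column sign-coherent integer matrix. If rank(B₂) ≤ 1, then B₂ is uniformly column sign-coherent with respect to B₁. -/

import Mathlib

/-- Mutation in direction `k` of an `(n+m) × n` integer matrix, rows indexed by
`Fin n ⊕ Fin m` (the principal part is the `Sum.inl` block). -/
def mutate {n m : ℕ} (k : Fin n) (B : Matrix (Fin n ⊕ Fin m) (Fin n) ℤ) :
    Matrix (Fin n ⊕ Fin m) (Fin n) ℤ :=
  fun i j =>
    if i = Sum.inl k ∨ j = k then -B i j
    else B i j + Int.sign (B i k) * max (B i k * B (Sum.inl k) j) 0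

/-- Apply a sequence of mutations `μ_{k_s} ⋯ μ_{k_1}` (the list is `[k_1, …, k_s]`). -/
def mutateSeq {n m : ℕ} (L : List (Fin n)) (B : Matrix (Fin n ⊕ Fin m) (Fin n) ℤ) :
    Matrix (Fin n ⊕ Fin m) (Fin n) ℤ :=
  L.foldl (fun M k => mutate k M) B

/-- Column sign-coherence. -/
def ColSgnCoh {m n : ℕ} (A : Matrix (Fin m) (Fin n) ℤ) : Prop :=
  ∀ (i i' : Fin m) (j : Fin n), 0 ≤ A i j * A i' j

/-- Uniform column sign-coherence of `B₂` with respect to `B₁`. -/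
def UColSgnCoh {n m : ℕ} (B₁ : Matrix (Fin n) (Fin n) ℤ)
    (B₂ : Matrix (Fin m) (Fin n) ℤ) : Prop :=
  ∀ L : List (Fin n),
    ColSgnCoh (fun (i : Fin m) (j : Fin n) =>
      mutateSeq L (Matrix.fromRows B₁ B₂) (Sum.inr i) j)

lemma sign_mul_max (x a b : ℤ) (hx : 0 ≤ x) :
    Int.sign (x * a) * max (x * a * b) 0 = x * (Int.sign a * max (a * b) 0) := by
  rcases hx.lt_or_eq with h | h
  · have h0 : x * (a * b) ⊔ 0 = x * (a * b ⊔ 0) := by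
      rw [mul_max_of_nonneg _ _ hx, mul_zero]
    rw [Int.sign_mul, Int.sign_eq_one_of_pos h, one_mul, mul_assoc, h0]
    ring
  · simp [← h]

lemma mutate_factor {n m : ℕ} (u : Fin m → ℤ) (hu : ∀ i, 0 ≤ u i)
    (M : Matrix (Fin n ⊕ Fin m) (Fin n) ℤ) (M' : Matrix (Fin n ⊕ Fin 1) (Fin n) ℤ)
    (htop : ∀ i j, M (Sum.inl i) j = M' (Sum.inl i) j)
    (hbot : ∀ i j, M (Sum.inr i) j = u i * M' (Sum.inr 0) j) (k : Fin n) :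
    (∀ i j, mutate k M (Sum.inl i) j = mutate k M' (Sum.inl i) j) ∧
    (∀ i j, mutate k M (Sum.inr i) j = u i * mutate k M' (Sum.inr 0) j) := by
  constructor
  · intro i j
    simp only [mutate, htop, Sum.inl.injEq]
  · intro i j
    simp only [mutate]
    have h1 : (Sum.inr i = Sum.inl k ∨ j = k) ↔ j = k := by simp
    have h2 : ((Sum.inr 0 : Fin n ⊕ Fin 1) = Sum.inl k ∨ j = k) ↔ j = k := by simp
    rw [if_congr h1 rfl rfl, if_congr h2 rfl rfl]
    by_cases hj : j = k
    · simp [hj, hbot]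
    · rw [if_neg hj, if_neg hj, hbot, hbot, htop, sign_mul_max _ _ _ (hu i)]
      ring

lemma mutateSeq_factor {n m : ℕ} (u : Fin m → ℤ) (hu : ∀ i, 0 ≤ u i)
    (L : List (Fin n)) :
    ∀ (M : Matrix (Fin n ⊕ Fin m) (Fin n) ℤ) (M' : Matrix (Fin n ⊕ Fin 1) (Fin n) ℤ),
    (∀ i j, M (Sum.inl i) j = M' (Sum.inl i) j) →
    (∀ i j, M (Sum.inr i) j = u i * M' (Sum.inr 0) j) →
    (∀ i j, mutateSeq L M (Sum.inl i) j = mutateSeq L M' (Sum.inl i) j) ∧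
    (∀ i j, mutateSeq L M (Sum.inr i) j = u i * mutateSeq L M' (Sum.inr 0) j) := by
  induction L with
  | nil => intro M M' htop hbot; exact ⟨htop, hbot⟩
  | cons k L ih =>
    intro M M' htop hbot
    obtain ⟨h1, h2⟩ := mutate_factor u hu M M' htop hbot k
    exact ih _ _ h1 h2

/-- Rank-one factorization of a matrix of rank at most one over `ℤ`. -/
lemma exists_factor {m n : ℕ} (B₂ : Matrix (Fin m) (Fin n) ℤ)
    (hrank : B₂.rank ≤ 1) :
    ∃ (u : Fin m → ℤ) (v : Fin n → ℤ), ∀ i j, B₂ i j = u i * v j := by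
  classical
  set N := LinearMap.range B₂.mulVecLin with hN
  have hfr : Module.finrank ℤ N ≤ 1 := hrank
  obtain ⟨g, hg⟩ : ∃ g : Fin m → ℤ, ∀ x : N, ∃ c : ℤ, (x : Fin m → ℤ) = c • g := by
    have b := Module.Free.chooseBasis ℤ N
    have hcard : Fintype.card (Module.Free.ChooseBasisIndex ℤ N) ≤ 1 := by
      rw [← Module.finrank_eq_card_chooseBasisIndex]; exact hfr
    by_cases hne : Nonempty (Module.Free.ChooseBasisIndex ℤ N)
    · obtain ⟨i0⟩ := hne
      haveI : Unique (Module.Free.ChooseBasisIndex ℤ N) :=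
        ⟨⟨i0⟩, fun a => by
          have := Fintype.card_le_one_iff.mp hcard
          exact this a i0⟩
      refine ⟨(b default : Fin m → ℤ), fun x => ⟨b.repr x default, ?_⟩⟩
      have := b.sum_repr x
      rw [Fintype.sum_unique] at this
      rw [← this]
      simp
    · haveI : IsEmpty (Module.Free.ChooseBasisIndex ℤ N) := not_nonempty_iff.mp hne
      refine ⟨0, fun x => ⟨0, ?_⟩⟩
      have := b.sum_repr x
      rw [Finset.univ_eq_empty, Finset.sum_empty] at this
      rw [← this]; simp
  have hcol : ∀ j : Fin n, ∃ c : ℤ, (fun i => B₂ i j) = c • g := by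
    intro j
    have hmem : (B₂.mulVec (Pi.single j 1)) ∈ N := ⟨Pi.single j 1, rfl⟩
    obtain ⟨c, hc⟩ := hg ⟨_, hmem⟩
    refine ⟨c, ?_⟩
    have : B₂.mulVec (Pi.single j 1) = fun i => B₂ i j := by
      ext i; simp [Matrix.mulVec_single]
    rw [← this]; exact hc
  choose v hv using hcol
  exact ⟨g, v, fun i j => by
    have := congrFun (hv j) i
    simpa [mul_comm] using this⟩


/-- Every column sign-coherent integer matrix of rank at most one is uniformly
column sign-coherent with respect to any skew-symmetrizable matrix. -/
theorem rank_le_one_uniform_colSgnCoh {m n : ℕ}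
    (B₁ : Matrix (Fin n) (Fin n) ℤ)
    (S : Fin n → ℤ) (hS : ∀ i, 0 < S i)
    (hskew : ∀ i j, S i * B₁ i j = -(S j * B₁ j i))
    (B₂ : Matrix (Fin m) (Fin n) ℤ)
    (hB₂ : ColSgnCoh B₂) (hrank : B₂.rank ≤ 1) :
    UColSgnCoh B₁ B₂ := by
  classical
  -- get a factorization with nonnegative left factor
  obtain ⟨u, v, hfac⟩ := exists_factor B₂ hrank
  obtain ⟨u, v, hu, hfac⟩ :
      ∃ (u : Fin m → ℤ) (v : Fin n → ℤ), (∀ i, 0 ≤ u i) ∧ ∀ i j, B₂ i j = u i * v j := by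
    by_cases hv0 : ∀ j, v j = 0
    · exact ⟨0, 0, fun i => le_refl 0, fun i j => by simp [hfac, hv0]⟩
    · push_neg at hv0
      obtain ⟨j0, hj0⟩ := hv0
      have hsgn : ∀ i i' : Fin m, 0 ≤ u i * u i' := by
        intro i i'
        have h := hB₂ i i' j0
        rw [hfac, hfac] at h
        have h3 : 0 < v j0 * v j0 := mul_self_pos.mpr hj0
        have h2 : 0 ≤ v j0 * v j0 * (u i * u i') := by nlinarith
        exact nonneg_of_mul_nonneg_right h2 h3
      by_cases hpos : ∀ i, 0 ≤ u i
      · exact ⟨u, v, hpos, hfac⟩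
      · push_neg at hpos
        obtain ⟨i0, hi0⟩ := hpos
        refine ⟨-u, -v, fun i => ?_, fun i j => by simp [hfac]⟩
        have := hsgn i i0
        simp only [Pi.neg_apply, neg_nonneg]
        nlinarith
  intro L i i' j
  set M' : Matrix (Fin n ⊕ Fin 1) (Fin n) ℤ :=
    Matrix.fromRows B₁ (Matrix.of fun (_ : Fin 1) j => v j) with hM'
  have key := mutateSeq_factor u hu L (Matrix.fromRows B₁ B₂) M'
    (fun i j => by simp [hM', Matrix.fromRows_apply_inl])
    (fun i j => by simp [hM', Matrix.fromRows_apply_inr, hfac])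
  dsimp only
  rw [key.2, key.2]
  set w := mutateSeq L M' (Sum.inr 0) j
  have : u i * w * (u i' * w) = (u i * u i') * (w * w) := by ring
  rw [this]
  exact mul_nonneg (mul_nonneg (hu i) (hu i')) (mul_self_nonneg w)
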